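/- Let W be a Coxeter group with generators s_i (i ∈ I), w ∈ W, and J ⊆ I such that ℓ(s_j w) = ℓ(w) − 1 for all j ∈ J. Then the standard parabolic subgroup W_J is finite and w = w_J^∘ · w' for some w' ∈ W with ℓ(w) = ℓ(w') + ℓ(w_J^∘), where w_J^∘ is the longest element of W_J. -/

import Mathlib

open CoxeterSystem

namespace DescentAux

open List

variable {B : Type*} {W : Type*} [Group W] {M : CoxeterMatrix B} (cs : CoxeterSystem M W)

open scoped Classical

section GroupIdentities

variable {x y : W}

lemma invol_inv (hx : x * x = 1) : x⁻¹ = x := by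
  rw [← mul_one x⁻¹, ← hx, ← mul_assoc, inv_mul_cancel, one_mul]

lemma invol_cancel_left (hx : x * x = 1) (z : W) : x * (x * z) = z := by
  rw [← mul_assoc, hx, one_mul]

lemma conj_eq_iff (X p t : W) : X * p * X⁻¹ = t ↔ p = X⁻¹ * t * X := by
  constructor
  · intro h
    rw [← h]
    simp [mul_assoc]
  · intro h
    rw [h]
    simp [mul_assoc]

lemma invol_conj_eq_iff (hy : y * y = 1) (Z t : W) : y * Z * y = t ↔ Z = y * t * y := by
  constructor
  · intro h
    rw [← h]
    simp [mul_assoc, invol_cancel_left hy, hy]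
  · intro h
    rw [h]
    simp [mul_assoc, invol_cancel_left hy, hy]

lemma invol_mul_pow (hx : x * x = 1) (hy : y * y = 1) (n : ℕ) :
    y * (x * y) ^ n = (y * x) ^ n * y := by
  induction n with
  | zero => simp
  | succ n ih =>
      rw [pow_succ' (x * y) n, pow_succ (y * x) n]
      calc y * (x * y * (x * y) ^ n)
          = y * x * (y * (x * y) ^ n) := by simp only [mul_assoc]
        _ = y * x * ((y * x) ^ n * y) := by rw [ih]
        _ = (y * x) * (y * x) ^ n * y := by simp only [mul_assoc]
        _ = (y * x) ^ n * (y * x) * y := by rw [pow_mul_comm']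

lemma invol_pow_inv (hx : x * x = 1) (hy : y * y = 1) (n : ℕ) :
    ((x * y) ^ n)⁻¹ = (y * x) ^ n := by
  rw [← inv_pow, mul_inv_rev, invol_inv hx, invol_inv hy]

lemma invol_word1 (hx : x * x = 1) (hy : y * y = 1) (n : ℕ) :
    ((x * y) ^ n)⁻¹ * y * (x * y) ^ n = (y * x) ^ (2 * n) * y := by
  rw [invol_pow_inv hx hy, mul_assoc, invol_mul_pow hx hy, ← mul_assoc, ← pow_add, two_mul]

lemma invol_word2 (hx : x * x = 1) (hy : y * y = 1) (n : ℕ) :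
    ((x * y) ^ n)⁻¹ * (y * x * y) * (x * y) ^ n = (y * x) ^ (2 * n + 1) * y := by
  rw [invol_pow_inv hx hy]
  calc (y * x) ^ n * (y * x * y) * (x * y) ^ n
      = (y * x) ^ n * ((y * x) * (y * (x * y) ^ n)) := by simp only [mul_assoc]
    _ = (y * x) ^ n * ((y * x) * ((y * x) ^ n * y)) := by rw [invol_mul_pow hx hy]
    _ = (y * x) ^ n * (y * x) ^ 1 * (y * x) ^ n * y := by
        rw [pow_one]; simp only [mul_assoc]
    _ = (y * x) ^ (n + 1 + n) * y := by rw [← pow_add, ← pow_add]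
    _ = (y * x) ^ (2 * n + 1) * y := by rw [show n + 1 + n = 2 * n + 1 by ring]

lemma invol_conj_step (hx : x * x = 1) (hy : y * y = 1) (n : ℕ) (p : W) :
    x * (y * ((x * y) ^ n * p * ((x * y) ^ n)⁻¹) * y) * x
      = (x * y) ^ (n + 1) * p * ((x * y) ^ (n + 1))⁻¹ := by
  rw [pow_succ' (x * y) n, mul_inv_rev, mul_inv_rev, invol_inv hx, invol_inv hy]
  simp only [mul_assoc]

end GroupIdentities

lemma simple_sq' (i : B) : cs.simple i * cs.simple i = 1 := cs.simple_mul_simple_self i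

/-- The underlying function of the involution of `W × ℤˣ` attached to a simple reflection. -/
noncomputable def refFun (i : B) (p : W × ℤˣ) : W × ℤˣ :=
  (cs.simple i * p.1 * cs.simple i, (if p.1 = cs.simple i then (-1 : ℤˣ) else 1) * p.2)

lemma refFun_invol (i : B) (p : W × ℤˣ) : refFun cs i (refFun cs i p) = p := by
  unfold refFun
  have hs := simple_sq' cs i
  have h1 : cs.simple i * (cs.simple i * p.1 * cs.simple i) * cs.simple i = p.1 := by
    simp [mul_assoc, invol_cancel_left hs, hs]
  have hiff : (cs.simple i * p.1 * cs.simple i = cs.simple i) ↔ (p.1 = cs.simple i) := by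
    rw [invol_conj_eq_iff hs, hs, one_mul]
  rw [Prod.mk.injEq]
  constructor
  · exact h1
  · rw [if_congr hiff rfl rfl]
    by_cases h : p.1 = cs.simple i <;> simp [h]

/-- The involution of `W × ℤˣ` attached to a simple reflection. -/
noncomputable def refPerm (i : B) : Equiv.Perm (W × ℤˣ) where
  toFun := refFun cs i
  invFun := refFun cs i
  left_inv := refFun_invol cs i
  right_inv := refFun_invol cs i

lemma refPerm_apply (i : B) (p : W × ℤˣ) :
    refPerm cs i p =
      (cs.simple i * p.1 * cs.simple i,
        (if p.1 = cs.simple i then (-1 : ℤˣ) else 1) * p.2) := rfl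

lemma refPerm_mul_pow (i j : B) (m : ℕ) (p : W × ℤˣ) :
    ((refPerm cs i * refPerm cs j) ^ m) p =
      ((cs.simple i * cs.simple j) ^ m * p.1 * (((cs.simple i * cs.simple j) ^ m)⁻¹),
        (∏ k ∈ Finset.range (2 * m),
          (if p.1 = (cs.simple j * cs.simple i) ^ k * cs.simple j then (-1 : ℤˣ) else 1))
          * p.2) := by
  have hx := simple_sq' cs i
  have hy := simple_sq' cs j
  induction m with
  | zero => simp
  | succ n ih =>
      rw [pow_succ', Equiv.Perm.mul_apply, ih, Equiv.Perm.mul_apply, refPerm_apply,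
        refPerm_apply]
      simp only [Prod.fst, Prod.snd]
      have hcond1 : ((cs.simple i * cs.simple j) ^ n * p.1
            * ((cs.simple i * cs.simple j) ^ n)⁻¹ = cs.simple j)
          ↔ (p.1 = (cs.simple j * cs.simple i) ^ (2 * n) * cs.simple j) := by
        rw [conj_eq_iff, invol_word1 hx hy]
      have hcond2 : (cs.simple j * ((cs.simple i * cs.simple j) ^ n * p.1
            * ((cs.simple i * cs.simple j) ^ n)⁻¹) * cs.simple j = cs.simple i)
          ↔ (p.1 = (cs.simple j * cs.simple i) ^ (2 * n + 1) * cs.simple j) := by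
        rw [invol_conj_eq_iff hy, conj_eq_iff]
        rw [show ((cs.simple i * cs.simple j) ^ n)⁻¹ * (cs.simple j * cs.simple i * cs.simple j)
            * (cs.simple i * cs.simple j) ^ n
            = (cs.simple j * cs.simple i) ^ (2 * n + 1) * cs.simple j
          from invol_word2 hx hy n]
      rw [Prod.mk.injEq]
      constructor
      · exact invol_conj_step hx hy n p.1
      · rw [if_congr hcond1 rfl rfl, if_congr hcond2 rfl rfl]
        rw [show 2 * (n + 1) = (2 * n + 1) + 1 by ring, Finset.prod_range_succ,
          Finset.prod_range_succ]
        simp [mul_assoc, mul_comm, mul_left_comm]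

lemma refPerm_liftable : M.IsLiftable (fun i => refPerm cs i) := by
  intro i j
  apply Equiv.ext
  intro p
  simp only
  rw [refPerm_mul_pow]
  rw [cs.simple_mul_simple_pow i j]
  have hprod : (∏ k ∈ Finset.range (2 * M i j),
      (if p.1 = (cs.simple j * cs.simple i) ^ k * cs.simple j then (-1 : ℤˣ) else 1)) = 1 := by
    rw [two_mul, Finset.prod_range_add]
    have hper : ∀ x : ℕ, (if p.1 = (cs.simple j * cs.simple i) ^ (M i j + x) * cs.simple j
        then (-1 : ℤˣ) else 1)
        = (if p.1 = (cs.simple j * cs.simple i) ^ x * cs.simple j then (-1 : ℤˣ) else 1) := by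
      intro x
      rw [pow_add, cs.simple_mul_simple_pow' i j, one_mul]
    rw [Finset.prod_congr rfl (fun x _ => hper x)]
    exact Int.units_mul_self _
  rw [hprod]
  simp

/-- The reflection representation homomorphism `W →* Perm (W × ℤˣ)`. -/
noncomputable def phi : W →* Equiv.Perm (W × ℤˣ) :=
  cs.lift ⟨fun i => refPerm cs i, refPerm_liftable cs⟩

lemma phi_simple (i : B) : phi cs (cs.simple i) = refPerm cs i :=
  cs.lift_apply_simple (refPerm_liftable cs) i

lemma leftInvSeq_cons (i : B) (ω : List B) :
    cs.leftInvSeq (i :: ω)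
      = cs.simple i :: List.map (⇑(MulAut.conj (cs.simple i))) (cs.leftInvSeq ω) := rfl

lemma phi_wordProd (ω : List B) (p : W × ℤˣ) :
    phi cs (cs.wordProd ω)⁻¹ p =
      ((cs.wordProd ω)⁻¹ * p.1 * cs.wordProd ω,
        ((-1 : ℤˣ) ^ ((cs.leftInvSeq ω).count p.1)) * p.2) := by
  induction ω generalizing p with
  | nil => simp
  | cons i ω ih =>
      rw [cs.wordProd_cons, mul_inv_rev, cs.inv_simple, map_mul, Equiv.Perm.mul_apply,
        phi_simple, refPerm_apply, ih]
      simp only [Prod.fst, Prod.snd]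
      rw [Prod.mk.injEq]
      constructor
      · simp only [mul_assoc]
      · rw [leftInvSeq_cons, List.count_cons]
        have hcnt : (List.map (⇑(MulAut.conj (cs.simple i))) (cs.leftInvSeq ω)).count p.1
            = (cs.leftInvSeq ω).count (cs.simple i * p.1 * cs.simple i) := by
          have hp : p.1 = (MulAut.conj (cs.simple i)) (cs.simple i * p.1 * cs.simple i) := by
            simp only [MulAut.conj_apply]
            rw [cs.inv_simple]
            simp [mul_assoc, invol_cancel_left (simple_sq' cs i), simple_sq' cs i]
          conv_lhs => rw [hp]
          exact List.count_map_of_injective _ _ (MulAut.conj (cs.simple i)).injective _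
        rw [hcnt]
        by_cases h : p.1 = cs.simple i
        · rw [if_pos h, if_pos (by simpa using h.symm), pow_add, pow_one]
          simp [mul_assoc, mul_comm, mul_left_comm]
        · rw [if_neg h, if_neg (by simpa using fun hc => h hc.symm), add_zero]
          simp [mul_assoc, mul_comm, mul_left_comm]

/-- The sign cocycle. -/
noncomputable def sgn (w t : W) : ℤˣ := ((phi cs w⁻¹) (t, 1)).2

lemma phi_inv_apply (w : W) (p : W × ℤˣ) :
    phi cs w⁻¹ p = (w⁻¹ * p.1 * w, sgn cs w p.1 * p.2) := by
  obtain ⟨ω, hred, rfl⟩ := cs.exists_reduced_word' w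
  rw [phi_wordProd]
  unfold sgn
  rw [phi_wordProd]
  simp

lemma sgn_one (t : W) : sgn cs 1 t = 1 := by
  unfold sgn
  simp

lemma sgn_mul (u v t : W) : sgn cs (u * v) t = sgn cs u t * sgn cs v (u⁻¹ * t * u) := by
  have h2 : phi cs (u * v)⁻¹ (t, 1)
      = (v⁻¹ * (u⁻¹ * t * u) * v, sgn cs v (u⁻¹ * t * u) * (sgn cs u t * 1)) := by
    rw [mul_inv_rev, map_mul, Equiv.Perm.mul_apply, phi_inv_apply cs u (t, 1),
      phi_inv_apply cs v (u⁻¹ * t * u, sgn cs u t * 1)]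
  have h1 : phi cs (u * v)⁻¹ (t, 1) = ((u * v)⁻¹ * t * (u * v), sgn cs (u * v) t * 1) :=
    phi_inv_apply cs (u * v) (t, 1)
  have h3 := congrArg Prod.snd (h1.symm.trans h2)
  simp only [mul_one] at h3
  rw [h3, mul_comm]

lemma sgn_simple_self (i : B) : sgn cs (cs.simple i) (cs.simple i) = -1 := by
  unfold sgn
  rw [cs.inv_simple, phi_simple, refPerm_apply]
  simp

lemma length_lt_of_sgn_neg {w t : W} (h : sgn cs w t = -1) :
    cs.length (t * w) < cs.length w := by
  obtain ⟨ω, hred, rfl⟩ := cs.exists_reduced_word' w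
  have hsgn : sgn cs (cs.wordProd ω) t = (-1 : ℤˣ) ^ ((cs.leftInvSeq ω).count t) := by
    unfold sgn
    rw [phi_wordProd]
    simp
  rw [hsgn] at h
  have hmem : t ∈ cs.leftInvSeq ω := by
    rw [← List.count_pos_iff]
    rcases Nat.even_or_odd ((cs.leftInvSeq ω).count t) with he | ho
    · rw [he.neg_one_pow] at h
      exact absurd h (by decide)
    · obtain ⟨c, hc⟩ := ho
      omega
  exact (cs.isLeftInversion_of_mem_leftInvSeq hred hmem).2

lemma sgn_eq_one_of_le {w t : W} (h : cs.length w ≤ cs.length (t * w)) :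
    sgn cs w t = 1 := by
  rcases Int.units_eq_one_or (sgn cs w t) with h1 | h1
  · exact h1
  · exact absurd (length_lt_of_sgn_neg cs h1) (by omega)

lemma sgn_self_of_isReflection {t : W} (ht : cs.IsReflection t) : sgn cs t t = -1 := by
  obtain ⟨r, i, rfl⟩ := ht
  have hfix : r⁻¹ * (r * cs.simple i * r⁻¹) * r = cs.simple i := by
    simp [mul_assoc]
  have hkey : sgn cs r (r * cs.simple i * r⁻¹) * sgn cs r⁻¹ (cs.simple i) = 1 := by
    have h1 : sgn cs (r * r⁻¹) (r * cs.simple i * r⁻¹) = 1 := by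
      rw [mul_inv_cancel, sgn_one]
    rw [sgn_mul, hfix] at h1
    exact h1
  have h2 : sgn cs (r * (cs.simple i * r⁻¹)) (r * cs.simple i * r⁻¹)
      = sgn cs r (r * cs.simple i * r⁻¹)
        * sgn cs (cs.simple i * r⁻¹) (r⁻¹ * (r * cs.simple i * r⁻¹) * r) :=
    sgn_mul cs r (cs.simple i * r⁻¹) (r * cs.simple i * r⁻¹)
  rw [hfix, ← mul_assoc] at h2
  have h3 : sgn cs (cs.simple i * r⁻¹) (cs.simple i)
      = sgn cs (cs.simple i) (cs.simple i) * sgn cs r⁻¹ (cs.simple i) := by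
    rw [sgn_mul]
    congr 1
    rw [cs.inv_simple]
    congr 1
    rw [simple_sq' cs i, one_mul]
  rw [h3, sgn_simple_self] at h2
  rw [h2]
  calc sgn cs r (r * cs.simple i * r⁻¹) * (-1 * sgn cs r⁻¹ (cs.simple i))
      = -(sgn cs r (r * cs.simple i * r⁻¹) * sgn cs r⁻¹ (cs.simple i)) := by
        rw [neg_one_mul, mul_neg]
    _ = -1 := by rw [hkey]

lemma sgn_neg_of_length_lt {w t : W} (ht : cs.IsReflection t)
    (h : cs.length (t * w) < cs.length w) : sgn cs w t = -1 := by
  have hw : w = t * (t * w) := by rw [← mul_assoc, ht.mul_self, one_mul]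
  have htt : t⁻¹ * t * t = t := by rw [ht.inv, ht.mul_self, one_mul]
  have h1 : sgn cs (t * w) t = 1 := by
    apply sgn_eq_one_of_le
    rw [← mul_assoc, ht.mul_self, one_mul]
    omega
  calc sgn cs w t = sgn cs (t * (t * w)) t := by rw [← hw]
    _ = sgn cs t t * sgn cs (t * w) (t⁻¹ * t * t) := sgn_mul cs t (t * w) t
    _ = (-1) * 1 := by rw [htt, sgn_self_of_isReflection cs ht, h1]
    _ = -1 := by rw [mul_one]

/-- The (left) exchange property. -/
lemma exchangeL {i : B} {ω : List B} (hred : cs.IsReduced ω)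
    (hlt : cs.length (cs.simple i * cs.wordProd ω) < cs.length (cs.wordProd ω)) :
    ∃ k, k < ω.length ∧ cs.simple i * cs.wordProd ω = cs.wordProd (ω.eraseIdx k) := by
  have hsgn : sgn cs (cs.wordProd ω) (cs.simple i) = -1 :=
    sgn_neg_of_length_lt cs (cs.isReflection_simple i) hlt
  have hsgn2 : sgn cs (cs.wordProd ω) (cs.simple i)
      = (-1 : ℤˣ) ^ ((cs.leftInvSeq ω).count (cs.simple i)) := by
    unfold sgn
    rw [phi_wordProd]
    simp
  rw [hsgn2] at hsgn
  have hmem : cs.simple i ∈ cs.leftInvSeq ω := by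
    rw [← List.count_pos_iff]
    rcases Nat.even_or_odd ((cs.leftInvSeq ω).count (cs.simple i)) with he | ho
    · rw [he.neg_one_pow] at hsgn
      exact absurd hsgn (by decide)
    · obtain ⟨c, hc⟩ := ho
      omega
  obtain ⟨k, hk, hk2⟩ := List.getElem_of_mem hmem
  have hklen : k < ω.length := by
    have := cs.length_leftInvSeq ω
    omega
  refine ⟨k, hklen, ?_⟩
  have hgetD : (cs.leftInvSeq ω).getD k 1 = cs.simple i := by
    rw [List.getD_eq_getElem _ _ hk, hk2]
  rw [← hgetD]
  exact cs.getD_leftInvSeq_mul_wordProd ω k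

/-- Every product of simple reflections indexed by `J` admits a reduced word over `J`. -/
lemma exists_reduced_Jword (J : Set B) :
    ∀ n (ω : List B), ω.length ≤ n → (∀ b ∈ ω, b ∈ J) →
      ∃ ω', (∀ b ∈ ω', b ∈ J) ∧ cs.IsReduced ω' ∧ cs.wordProd ω' = cs.wordProd ω := by
  intro n
  induction n with
  | zero =>
      intro ω hlen _
      rw [Nat.le_zero, List.length_eq_zero_iff] at hlen
      refine ⟨[], by simp, ?_, by rw [hlen]⟩
      show cs.length (cs.wordProd []) = ([] : List B).length
      simp
  | succ n ih =>
      intro ω hlen hJ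
      match ω with
      | [] =>
          refine ⟨[], by simp, ?_, rfl⟩
          show cs.length (cs.wordProd []) = ([] : List B).length
          simp
      | i :: ω₁ =>
          have hJ1 : ∀ b ∈ ω₁, b ∈ J := fun b hb => hJ b (List.mem_cons_of_mem i hb)
          have hlen1 : ω₁.length ≤ n := by simpa using hlen
          obtain ⟨ω₁', hJ', hred', hprod'⟩ := ih ω₁ hlen1 hJ1
          rcases cs.length_simple_mul (cs.wordProd ω₁') i with hasc | hdes
          · refine ⟨i :: ω₁', ?_, ?_, ?_⟩
            · intro b hb
              rcases List.mem_cons.mp hb with rfl | hb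
              · exact hJ b List.mem_cons_self
              · exact hJ' b hb
            · show cs.length (cs.wordProd (i :: ω₁')) = (i :: ω₁').length
              rw [cs.wordProd_cons, hasc, hred']
              simp
            · rw [cs.wordProd_cons, cs.wordProd_cons, hprod']
          · have hlt : cs.length (cs.simple i * cs.wordProd ω₁')
                < cs.length (cs.wordProd ω₁') := by omega
            obtain ⟨k, hk, hke⟩ := exchangeL cs hred' hlt
            have hJe : ∀ b ∈ ω₁'.eraseIdx k, b ∈ J := by
              intro b hb
              exact hJ' b (List.eraseIdx_subset hb)
            have hlene : (ω₁'.eraseIdx k).length ≤ n := by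
              rw [List.length_eraseIdx]
              have h1 : cs.length (cs.wordProd ω₁') = ω₁'.length := hred'
              have h2 : cs.length (cs.wordProd ω₁') = cs.length (cs.wordProd ω₁) := by
                rw [hprod']
              have h3 : cs.length (cs.wordProd ω₁) ≤ ω₁.length := cs.length_wordProd_le ω₁
              simp only [if_pos hk]
              omega
            obtain ⟨ω'', hJ'', hred'', hprod''⟩ := ih (ω₁'.eraseIdx k) hlene hJe
            refine ⟨ω'', hJ'', hred'', ?_⟩
            rw [hprod'', ← hke, cs.wordProd_cons, hprod']

/-- Key lemma: if every `j ∈ J` is a left descent of `w`, then any element with a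
reduced `J`-word is a "prefix" of `w`. -/
lemma prefix_of_reduced_Jword {w : W} {J : Set B}
    (hdesc : ∀ j ∈ J, cs.length (cs.simple j * w) + 1 = cs.length w) :
    ∀ ω : List B, (∀ b ∈ ω, b ∈ J) → cs.IsReduced ω →
      cs.length (cs.wordProd ω) + cs.length ((cs.wordProd ω)⁻¹ * w) = cs.length w := by
  intro ω
  induction ω with
  | nil => simp
  | cons j ω₀ ih =>
      intro hJ hred
      have hj : j ∈ J := hJ j List.mem_cons_self
      have hred₀ : cs.IsReduced ω₀ := by
        have := CoxeterSystem.IsReduced.drop hred 1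
        simpa using this
      have hJ₀ : ∀ b ∈ ω₀, b ∈ J := fun b hb => hJ b (List.mem_cons_of_mem j hb)
      have ihe := ih hJ₀ hred₀
      obtain ⟨b, hb_red, hb⟩ := cs.exists_reduced_word' ((cs.wordProd ω₀)⁻¹ * w)
      have hπab : cs.wordProd (ω₀ ++ b) = w := by
        rw [cs.wordProd_append, ← hb]
        simp [mul_assoc]
      have hlen₀ : cs.length (cs.wordProd ω₀) = ω₀.length := hred₀
      have hlenb : cs.length (cs.wordProd b) = b.length := hb_red
      have hab_red : cs.IsReduced (ω₀ ++ b) := by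
        show cs.length (cs.wordProd (ω₀ ++ b)) = (ω₀ ++ b).length
        rw [hπab, List.length_append, ← hlen₀, ← hlenb, ← hb]
        omega
      have hwlt : cs.length (cs.simple j * cs.wordProd (ω₀ ++ b))
          < cs.length (cs.wordProd (ω₀ ++ b)) := by
        rw [hπab]
        have := hdesc j hj
        omega
      obtain ⟨k, hk, hke⟩ := exchangeL cs hab_red hwlt
      have hredcons : cs.length (cs.wordProd (j :: ω₀)) = ω₀.length + 1 := by
        have h : cs.length (cs.wordProd (j :: ω₀)) = (j :: ω₀).length := hred
        simpa using h
      have hw : cs.wordProd ω₀ * cs.wordProd b = w := by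
        rw [← cs.wordProd_append]
        exact hπab
      rcases lt_or_ge k ω₀.length with hkl | hkg
      · exfalso
        rw [List.eraseIdx_append_of_lt_length hkl b] at hke
        rw [cs.wordProd_append ω₀ b, cs.wordProd_append (ω₀.eraseIdx k) b] at hke
        have h2 : (cs.simple j * cs.wordProd ω₀) * cs.wordProd b
            = cs.wordProd (ω₀.eraseIdx k) * cs.wordProd b := by
          rw [mul_assoc]
          exact hke
        have heq : cs.wordProd (ω₀.eraseIdx k) = cs.simple j * cs.wordProd ω₀ :=
          (mul_right_cancel h2).symm
        have h3 : cs.length (cs.wordProd (ω₀.eraseIdx k)) ≤ (ω₀.eraseIdx k).length :=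
          cs.length_wordProd_le _
        rw [List.length_eraseIdx, if_pos hkl] at h3
        rw [heq, ← cs.wordProd_cons] at h3
        omega
      · rw [List.eraseIdx_append_of_length_le hkg b] at hke
        rw [cs.wordProd_append ω₀ b, cs.wordProd_append ω₀ (b.eraseIdx (k - ω₀.length))] at hke
        have heq : (cs.wordProd (j :: ω₀))⁻¹ * w
            = cs.wordProd (b.eraseIdx (k - ω₀.length)) := by
          rw [cs.wordProd_cons, mul_inv_rev, cs.inv_simple]
          calc (cs.wordProd ω₀)⁻¹ * cs.simple j * w
              = (cs.wordProd ω₀)⁻¹ * (cs.simple j * (cs.wordProd ω₀ * cs.wordProd b)) := by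
                rw [mul_assoc, hw]
            _ = (cs.wordProd ω₀)⁻¹
                * (cs.wordProd ω₀ * cs.wordProd (b.eraseIdx (k - ω₀.length))) := by rw [hke]
            _ = cs.wordProd (b.eraseIdx (k - ω₀.length)) := by
                rw [← mul_assoc, inv_mul_cancel, one_mul]
        have h4 : cs.length ((cs.wordProd (j :: ω₀))⁻¹ * w)
            ≤ (b.eraseIdx (k - ω₀.length)).length := by
          rw [heq]
          exact cs.length_wordProd_le _
        have h5 : k - ω₀.length < b.length := by
          rw [List.length_append] at hk
          omega
        rw [List.length_eraseIdx, if_pos h5] at h4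
        have h6 : cs.length w ≤ cs.length (cs.wordProd (j :: ω₀))
            + cs.length ((cs.wordProd (j :: ω₀))⁻¹ * w) := by
          have h7 := cs.length_mul_le (cs.wordProd (j :: ω₀)) ((cs.wordProd (j :: ω₀))⁻¹ * w)
          rw [← mul_assoc, mul_inv_cancel, one_mul] at h7
          exact h7
        have h7 : cs.length w = ω₀.length + b.length := by
          have h8 : cs.length (cs.wordProd (ω₀ ++ b)) = (ω₀ ++ b).length := hab_red
          rw [hπab, List.length_append] at h8
          exact h8
        omega

end DescentAux

theorem descent_set_parabolic_finite {I : Type*} {W : Type*} [Group W]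
    {M : CoxeterMatrix I} (cs : CoxeterSystem M W) (w : W) (J : Set I)
    (hdesc : ∀ j ∈ J, cs.length (cs.simple j * w) + 1 = cs.length w) :
    Finite (Subgroup.closure (cs.simple '' J) : Subgroup W) ∧
    ∃ w₀ ∈ Subgroup.closure (cs.simple '' J),
      (∀ u ∈ Subgroup.closure (cs.simple '' J), cs.length u ≤ cs.length w₀) ∧
      ∃ w' : W, w = w₀ * w' ∧ cs.length w = cs.length w' + cs.length w₀ := by
  classical
  set H := Subgroup.closure (cs.simple '' J) with hH
  have hJword : ∀ u ∈ H, ∃ ω : List I, (∀ b ∈ ω, b ∈ J) ∧ cs.wordProd ω = u := by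
    intro u hu
    induction hu using Subgroup.closure_induction with
    | mem x hx =>
        obtain ⟨j, hj, rfl⟩ := hx
        exact ⟨[j], by simpa using hj, by simp⟩
    | one => exact ⟨[], by simp, by simp⟩
    | mul x y hx hy ihx ihy =>
        obtain ⟨ω₁, h1, hp1⟩ := ihx
        obtain ⟨ω₂, h2, hp2⟩ := ihy
        refine ⟨ω₁ ++ ω₂, ?_, ?_⟩
        · intro b hb
          rcases List.mem_append.mp hb with h | h
          · exact h1 b h
          · exact h2 b h
        · rw [cs.wordProd_append, hp1, hp2]
    | inv x hx ihx =>
        obtain ⟨ω₁, h1, hp1⟩ := ihx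
        refine ⟨ω₁.reverse, ?_, ?_⟩
        · intro b hb
          exact h1 b (List.mem_reverse.mp hb)
        · rw [cs.wordProd_reverse, hp1]
  have hJred : ∀ u ∈ H, ∃ ω : List I,
      (∀ b ∈ ω, b ∈ J) ∧ cs.IsReduced ω ∧ cs.wordProd ω = u := by
    intro u hu
    obtain ⟨ω, hJω, hπ⟩ := hJword u hu
    obtain ⟨ω', h1, h2, h3⟩ := DescentAux.exists_reduced_Jword cs J ω.length ω le_rfl hJω
    exact ⟨ω', h1, h2, by rw [h3, hπ]⟩
  have hpre : ∀ u ∈ H, cs.length u + cs.length (u⁻¹ * w) = cs.length w := by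
    intro u hu
    obtain ⟨ω, hJω, hred, hπ⟩ := hJred u hu
    have := DescentAux.prefix_of_reduced_Jword cs hdesc ω hJω hred
    rwa [hπ] at this
  have hlen_le : ∀ u ∈ H, cs.length u ≤ cs.length w := by
    intro u hu
    have := hpre u hu
    omega
  obtain ⟨Ω, hΩred, hΩ⟩ := cs.exists_reduced_word' w
  have hsimple_mem : ∀ j ∈ J, cs.simple j ∈ cs.leftInvSeq Ω := by
    intro j hj
    have hlt : cs.length (cs.simple j * cs.wordProd Ω) < cs.length (cs.wordProd Ω) := by
      rw [← hΩ]
      have := hdesc j hj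
      omega
    have hsgn : DescentAux.sgn cs (cs.wordProd Ω) (cs.simple j) = -1 :=
      DescentAux.sgn_neg_of_length_lt cs (cs.isReflection_simple j) hlt
    have hsgn2 : DescentAux.sgn cs (cs.wordProd Ω) (cs.simple j)
        = (-1 : ℤˣ) ^ ((cs.leftInvSeq Ω).count (cs.simple j)) := by
      unfold DescentAux.sgn
      rw [DescentAux.phi_wordProd]
      simp
    rw [hsgn2] at hsgn
    rw [← List.count_pos_iff]
    rcases Nat.even_or_odd ((cs.leftInvSeq Ω).count (cs.simple j)) with he | ho
    · rw [he.neg_one_pow] at hsgn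
      exact absurd hsgn (by decide)
    · obtain ⟨c, hc⟩ := ho
      omega
  set S₀ : Set W := {x | x ∈ cs.leftInvSeq Ω} with hS₀
  have hS₀fin : S₀.Finite := (cs.leftInvSeq Ω).finite_toSet
  haveI : Finite ↥S₀ := hS₀fin.to_subtype
  have hLfin : {l : List ↥S₀ | l.length ≤ cs.length w}.Finite :=
    List.finite_length_le ↥S₀ (cs.length w)
  have hHsub : (H : Set W) ⊆
      (fun l : List ↥S₀ => (l.map Subtype.val).prod) '' {l | l.length ≤ cs.length w} := by
    intro u hu
    obtain ⟨ω, hJω, hred, hπ⟩ := hJred u hu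
    have hmem : ∀ b ∈ ω, cs.simple b ∈ S₀ := by
      intro b hb
      exact hsimple_mem b (hJω b hb)
    refine ⟨ω.attach.map (fun x => (⟨cs.simple x.1, hmem x.1 x.2⟩ : ↥S₀)), ?_, ?_⟩
    · show (ω.attach.map _).length ≤ cs.length w
      rw [List.length_map, List.length_attach]
      have h1 : cs.length (cs.wordProd ω) = ω.length := hred
      have h2 := hlen_le u hu
      rw [hπ] at h1
      omega
    · show ((ω.attach.map (fun x => (⟨cs.simple x.1, hmem x.1 x.2⟩ : ↥S₀))).map
        Subtype.val).prod = u
      rw [List.map_map]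
      have heq : (ω.attach.map (Subtype.val ∘ fun x => (⟨cs.simple x.1, hmem x.1 x.2⟩ : ↥S₀)))
          = ω.map cs.simple := by
        rw [show (Subtype.val ∘ fun x : {b // b ∈ ω} => (⟨cs.simple x.1, hmem x.1 x.2⟩ : ↥S₀))
            = (fun x : {b // b ∈ ω} => cs.simple x.1) from rfl]
        rw [show (fun x : {b // b ∈ ω} => cs.simple x.1)
            = cs.simple ∘ Subtype.val from rfl]
        rw [← List.map_map, List.attach_map_subtype_val]
      rw [heq, ← hπ]
      rfl
  have hHfin : (H : Set W).Finite := Set.Finite.subset (hLfin.image _) hHsub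
  constructor
  · exact hHfin.to_subtype
  · obtain ⟨w₀, hw₀H, hw₀max⟩ :=
      Set.Finite.exists_maximalFor cs.length (H : Set W) hHfin ⟨1, H.one_mem⟩
    refine ⟨w₀, hw₀H, ?_, ?_⟩
    · intro u hu
      by_contra hcon
      push_neg at hcon
      have := hw₀max (j := u) hu (le_of_lt hcon)
      omega
    · refine ⟨w₀⁻¹ * w, by rw [← mul_assoc, mul_inv_cancel, one_mul], ?_⟩
      have := hpre w₀ hw₀H
      omega
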